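/- arXiv:2510.10929 — 2 statements merged into one kernel-verified Lean document; each statement's English description precedes it below -/
import Mathlib

section
/- (Better-response monotonicity.) Under any weighted proportional sharing rule WPS^w with strictly positive weights, let T^1 and T^2 be two POT policies with T^1_i = T^2_i for some retailer i ∈ N. If N[T^2_i;T^2_{-i}] ⊆ N[T^1_i;T^1_{-i}], then f_i(2T^1_i;T^1_{-i}) < f_i(T^1_i;T^1_{-i}) implies f_i(2T^2_i;T^2_{-i}) < f_i(T^2_i;T^2_{-i}). In particular, if N[T^1_i;T^1_{-i}] = N[T^2_i;T^2_{-i}], then f_i(2T^1_i;T^1_{-i}) < f_i(T^1_i;T^1_{-i}) if and only if f_i(2T^2_i;T^2_{-i}) < f_i(T^2_i;T^2_{-i}). -/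
open Finset

noncomputable section

/-- `t` is a power-of-two (POT) value with base period `B`. -/
def IsPOT (B t : ℝ) : Prop := ∃ z : ℤ, t = (2 : ℝ) ^ z * B

/-- Membership of an interval `t` in retailer `i`'s strategy set `Γ_i`,
given major setup cost `K0`, minor setup cost `Ki` and holding parameter `Hi`. -/
def InStrategy (B K0 Ki Hi t : ℝ) : Prop :=
  IsPOT B t ∧ Real.sqrt (Ki / (2 * Hi)) ≤ t ∧ t ≤ Real.sqrt (2 * (K0 + Ki) / Hi)

/-- `N[τ; T_{-i}] = {i} ∪ {j : T j ≤ τ}`. -/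
def grp {n : ℕ} (T : Fin n → ℝ) (i : Fin n) (τ : ℝ) : Finset (Fin n) :=
  insert i (Finset.univ.filter fun j => T j ≤ τ)

/-- The set of levels `L(T) = {T j : j ∈ N}`. -/
def levels {n : ℕ} (T : Fin n → ℝ) : Finset ℝ := Finset.image T Finset.univ

/-- `1/τ⁺`: the inverse of the smallest level larger than `τ`, with the
convention that it is `0` when no larger level exists. -/
def invSucc (L : Finset ℝ) (τ : ℝ) : ℝ :=
  if h : (L.filter fun u => τ < u).Nonempty then 1 / (L.filter fun u => τ < u).min' h
  else 0

/-- Major-setup share `x_i(T)` of retailer `i` under the weighted proportional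
sharing rule with weights `w` (intended for strictly positive weights). -/
def share {n : ℕ} (K0 : ℝ) (w T : Fin n → ℝ) (i : Fin n) : ℝ :=
  ∑ τ ∈ (levels T).filter (fun τ => T i ≤ τ),
    (1 / τ - invSucc (levels T) τ) *
      (w i / ∑ j ∈ Finset.univ.filter (fun j => T j ≤ τ), w j) * K0

/-- Major-setup share for nonnegative weights: if the order group has total
weight zero, the major setup cost is split equally among its members. -/
def shareZ {n : ℕ} (K0 : ℝ) (w T : Fin n → ℝ) (i : Fin n) : ℝ :=
  ∑ τ ∈ (levels T).filter (fun τ => T i ≤ τ),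
    (1 / τ - invSucc (levels T) τ) *
      (if 0 < ∑ j ∈ Finset.univ.filter (fun j => T j ≤ τ), w j
        then w i / ∑ j ∈ Finset.univ.filter (fun j => T j ≤ τ), w j
        else 1 / ((Finset.univ.filter fun j => T j ≤ τ) : Finset (Fin n)).card) * K0

/-- Individual cost `f_i(T) = H_i T_i + K_i / T_i + x_i(T)` under `WPS^w`. -/
def indCost {n : ℕ} (K0 : ℝ) (K H w : Fin n → ℝ) (T : Fin n → ℝ) (i : Fin n) : ℝ :=
  H i * T i + K i / T i + share K0 w T i

/-- Individual cost under the zero-weight-tolerant sharing rule. -/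
def indCostZ {n : ℕ} (K0 : ℝ) (K H w : Fin n → ℝ) (T : Fin n → ℝ) (i : Fin n) : ℝ :=
  H i * T i + K i / T i + shareZ K0 w T i

/-- System cost `C(T)`. -/
def sysCost {n : ℕ} (K0 : ℝ) (K H : Fin n → ℝ) (T : Fin n → ℝ) : ℝ :=
  (∑ i, (H i * T i + K i / T i)) + K0 / (⨅ i, T i)

/-- Nash equilibrium of the game induced by `WPS^w`. -/
def IsNE {n : ℕ} (B K0 : ℝ) (K H w : Fin n → ℝ) (T : Fin n → ℝ) : Prop :=
  (∀ i, InStrategy B K0 (K i) (H i) (T i)) ∧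
  ∀ i t, InStrategy B K0 (K i) (H i) t →
    indCost K0 K H w T i ≤ indCost K0 K H w (Function.update T i t) i

/-- Nash equilibrium for the zero-weight-tolerant sharing rule. -/
def IsNEZ {n : ℕ} (B K0 : ℝ) (K H w : Fin n → ℝ) (T : Fin n → ℝ) : Prop :=
  (∀ i, InStrategy B K0 (K i) (H i) (T i)) ∧
  ∀ i t, InStrategy B K0 (K i) (H i) t →
    indCostZ K0 K H w T i ≤ indCostZ K0 K H w (Function.update T i t) i

/-- `s = min_{∅ ⊂ S ⊆ N} (K0 + Σ_{i∈S} K_i)/(Σ_{i∈S} H_i)`. -/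
def sval (n : ℕ) (K0 : ℝ) (K H : Fin n → ℝ) : ℝ :=
  sInf ((fun S : Finset (Fin n) => (K0 + ∑ i ∈ S, K i) / ∑ i ∈ S, H i) '' {S | S.Nonempty})

/-- `[b]_POT`: the POT value `a` with `b/√2 < a ≤ √2·b`. -/
def potRound (B b : ℝ) : ℝ := (2 : ℝ) ^ (round (Real.logb 2 (b / B))) * B

/-- The optimal centralized POT policy `T^c`. -/
def Tc (n : ℕ) (B K0 : ℝ) (K H : Fin n → ℝ) (i : Fin n) : ℝ :=
  if K i ≤ sval n K0 K H * H i then potRound B (Real.sqrt (sval n K0 K H))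
  else potRound B (Real.sqrt (K i / H i))

end
section myaux
open Finset

private lemma pot_pos' {B t : ℝ} (hB : 0 < B) (h : IsPOT B t) : 0 < t := by
  obtain ⟨z, rfl⟩ := h
  positivity

private lemma pot_two_le' {B t x : ℝ} (hB : 0 < B) (ht : IsPOT B t) (hx : IsPOT B x)
    (h : t < x) : 2 * t ≤ x := by
  obtain ⟨a, rfl⟩ := ht
  obtain ⟨b, rfl⟩ := hx
  have hab : a < b := by
    have h2 : (2:ℝ) ^ a < 2 ^ b := (mul_lt_mul_iff_of_pos_right hB).mp h
    exact_mod_cast (zpow_lt_zpow_iff_right₀ (by norm_num : (1:ℝ) < 2)).mp h2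
  have h3 : (2:ℝ) ^ (a + 1) ≤ 2 ^ b := zpow_le_zpow_right₀ (by norm_num) hab
  have he : 2 * ((2:ℝ) ^ a * B) = 2 ^ (a + 1) * B := by
    rw [zpow_add_one₀ (two_ne_zero)]; ring
  rw [he]
  exact mul_le_mul_of_nonneg_right h3 hB.le

private lemma share_step' {n : ℕ} (B K0 : ℝ) (w T : Fin n → ℝ) (i : Fin n)
    (hB : 0 < B) (hT : ∀ j, IsPOT B (T j)) :
    share K0 w T i =
      (1 / T i - 1 / (2 * T i)) *
        (w i / ∑ j ∈ Finset.univ.filter (fun j => T j ≤ T i), w j) * K0 +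
      share K0 w (Function.update T i (2 * T i)) i := by
  have ht : 0 < T i := pot_pos' hB (hT i)
  set t := T i with ht_def
  set T' := Function.update T i (2 * t) with hT'_def
  have hT'i : T' i = 2 * t := Function.update_self i (2 * t) T
  have hT'j : ∀ j, j ≠ i → T' j = T j := fun j hj => Function.update_of_ne hj _ T
  have hmemt : t ∈ levels T := Finset.mem_image.mpr ⟨i, Finset.mem_univ i, rfl⟩
  have hmem2 : 2 * t ∈ levels T' := Finset.mem_image.mpr ⟨i, Finset.mem_univ i, hT'i⟩
  have hgap : ∀ u ∈ levels T, t < u → 2 * t ≤ u := by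
    intro u hu hlt
    obtain ⟨j, _, rfl⟩ := Finset.mem_image.mp hu
    exact pot_two_le' hB (hT i) (hT j) hlt
  have hlev : ∀ u, 2 * t < u → (u ∈ levels T ↔ u ∈ levels T') := by
    intro u hu
    simp only [levels, Finset.mem_image, Finset.mem_univ, true_and]
    constructor
    · rintro ⟨j, rfl⟩
      have hj : j ≠ i := by rintro rfl; rw [← ht_def] at hu; nlinarith
      exact ⟨j, hT'j j hj⟩
    · rintro ⟨j, rfl⟩
      have hj : j ≠ i := by rintro rfl; rw [hT'i] at hu; linarith
      exact ⟨j, (hT'j j hj).symm⟩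
  have hfil : ∀ τ, 2 * t ≤ τ →
      (Finset.univ.filter fun j => T j ≤ τ) = (Finset.univ.filter fun j => T' j ≤ τ) := by
    intro τ hτ
    ext j
    simp only [Finset.mem_filter, Finset.mem_univ, true_and]
    by_cases hj : j = i
    · subst hj
      rw [hT'i, ← ht_def]
      constructor <;> intro <;> linarith
    · rw [hT'j j hj]
  have hsucc : ∀ τ, 2 * t ≤ τ → invSucc (levels T) τ = invSucc (levels T') τ := by
    intro τ hτ
    have hset : (levels T).filter (fun u => τ < u) = (levels T').filter (fun u => τ < u) := by
      ext u
      simp only [Finset.mem_filter]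
      constructor
      · rintro ⟨h1, h2⟩; exact ⟨(hlev u (lt_of_le_of_lt hτ h2)).mp h1, h2⟩
      · rintro ⟨h1, h2⟩; exact ⟨(hlev u (lt_of_le_of_lt hτ h2)).mpr h1, h2⟩
    rw [invSucc, invSucc, hset]
  have hFeq : ∀ τ, 2 * t ≤ τ →
      (1 / τ - invSucc (levels T) τ) *
        (w i / ∑ j ∈ Finset.univ.filter (fun j => T j ≤ τ), w j) * K0 =
      (1 / τ - invSucc (levels T') τ) *
        (w i / ∑ j ∈ Finset.univ.filter (fun j => T' j ≤ τ), w j) * K0 := by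
    intro τ hτ
    rw [hsucc τ hτ, hfil τ hτ]
  have hS : (levels T).filter (fun τ => T i ≤ τ)
      = insert t ((levels T).filter (fun τ => 2 * t ≤ τ)) := by
    ext τ
    simp only [Finset.mem_insert, Finset.mem_filter, ← ht_def]
    constructor
    · rintro ⟨h1, h2⟩
      rcases eq_or_lt_of_le h2 with h3 | h3
      · exact Or.inl h3.symm
      · exact Or.inr ⟨h1, hgap τ h1 h3⟩
    · rintro (rfl | ⟨h1, h2⟩)
      · exact ⟨hmemt, le_refl _⟩
      · exact ⟨h1, by linarith⟩
  have hnot : t ∉ (levels T).filter (fun τ => 2 * t ≤ τ) := by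
    simp only [Finset.mem_filter]
    rintro ⟨-, h⟩; linarith
  have hS' : (levels T').filter (fun τ => T' i ≤ τ)
      = insert (2 * t) ((levels T).filter (fun τ => 2 * t < τ)) := by
    ext τ
    simp only [Finset.mem_insert, Finset.mem_filter, hT'i]
    constructor
    · rintro ⟨h1, h2⟩
      rcases eq_or_lt_of_le h2 with h3 | h3
      · exact Or.inl h3.symm
      · exact Or.inr ⟨(hlev τ h3).mpr h1, h3⟩
    · rintro (rfl | ⟨h1, h2⟩)
      · exact ⟨hmem2, le_refl _⟩
      · exact ⟨(hlev τ h2).mp h1, h2.le⟩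
  have hnot' : 2 * t ∉ (levels T).filter (fun τ => 2 * t < τ) := by
    simp only [Finset.mem_filter]
    rintro ⟨-, h⟩; linarith
  by_cases h2L : 2 * t ∈ levels T
  · -- Case A: some other retailer at level 2t
    have hA : (levels T).filter (fun τ => 2 * t ≤ τ)
        = insert (2 * t) ((levels T).filter (fun τ => 2 * t < τ)) := by
      ext τ
      simp only [Finset.mem_insert, Finset.mem_filter]
      constructor
      · rintro ⟨h1, h2⟩
        rcases eq_or_lt_of_le h2 with h3 | h3
        · exact Or.inl h3.symm
        · exact Or.inr ⟨h1, h3⟩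
      · rintro (rfl | ⟨h1, h2⟩)
        · exact ⟨h2L, le_refl _⟩
        · exact ⟨h1, h2.le⟩
    have hvt : invSucc (levels T) t = 1 / (2 * t) := by
      have hne : ((levels T).filter (fun u => t < u)).Nonempty :=
        ⟨2 * t, Finset.mem_filter.mpr ⟨h2L, by linarith⟩⟩
      have hmin : ((levels T).filter (fun u => t < u)).min' hne = 2 * t := by
        apply le_antisymm
        · exact Finset.min'_le _ _ (Finset.mem_filter.mpr ⟨h2L, by linarith⟩)
        · apply Finset.le_min'
          intro u hu
          obtain ⟨h1, h2⟩ := Finset.mem_filter.mp hu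
          exact hgap u h1 h2
      rw [invSucc, dif_pos hne, hmin]
    have hnotA : t ∉ insert (2 * t) ((levels T).filter (fun τ => 2 * t < τ)) := by
      simp only [Finset.mem_insert, Finset.mem_filter]
      rintro (h | ⟨-, h⟩) <;> linarith
    rw [share, share, hS, hS', hA, Finset.sum_insert hnotA]
    rw [Finset.sum_insert hnot', Finset.sum_insert hnot', hvt]
    have htail : ∀ τ ∈ (levels T).filter (fun τ => 2 * t < τ),
        (1 / τ - invSucc (levels T) τ) *
          (w i / ∑ j ∈ Finset.univ.filter (fun j => T j ≤ τ), w j) * K0 =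
        (1 / τ - invSucc (levels T') τ) *
          (w i / ∑ j ∈ Finset.univ.filter (fun j => T' j ≤ τ), w j) * K0 := by
      intro τ hτ
      exact hFeq τ (Finset.mem_filter.mp hτ).2.le
    rw [Finset.sum_congr rfl htail, hFeq (2 * t) (le_refl _)]
  · -- Case B: nobody else at level 2t
    have hBeq : (levels T).filter (fun τ => 2 * t ≤ τ)
        = (levels T).filter (fun τ => 2 * t < τ) := by
      ext τ
      simp only [Finset.mem_filter]
      constructor
      · rintro ⟨h1, h2⟩
        refine ⟨h1, lt_of_le_of_ne h2 ?_⟩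
        rintro rfl; exact h2L h1
      · rintro ⟨h1, h2⟩; exact ⟨h1, h2.le⟩
    have hW : (Finset.univ.filter fun j => T' j ≤ 2 * t)
        = (Finset.univ.filter fun j => T j ≤ t) := by
      ext j
      simp only [Finset.mem_filter, Finset.mem_univ, true_and]
      by_cases hj : j = i
      · subst hj
        rw [hT'i, ← ht_def]
        constructor <;> intro <;> linarith
      · rw [hT'j j hj]
        constructor
        · intro h
          by_contra hc
          push_neg at hc
          have hm : T j ∈ levels T := Finset.mem_image.mpr ⟨j, Finset.mem_univ j, rfl⟩
          have := hgap (T j) hm hc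
          have : T j = 2 * t := le_antisymm h this
          exact h2L (this ▸ hm)
        · intro h; linarith
    have hv : invSucc (levels T) t = invSucc (levels T') (2 * t) := by
      have hset : (levels T).filter (fun u => t < u)
          = (levels T').filter (fun u => 2 * t < u) := by
        ext u
        simp only [Finset.mem_filter]
        constructor
        · rintro ⟨h1, h2⟩
          have h3 : 2 * t ≤ u := hgap u h1 h2
          have h4 : 2 * t < u := lt_of_le_of_ne h3 (by rintro rfl; exact h2L h1)
          exact ⟨(hlev u h4).mp h1, h4⟩
        · rintro ⟨h1, h2⟩
          exact ⟨(hlev u h2).mpr h1, by linarith⟩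
      rw [invSucc, invSucc, hset]
    have hnotB : t ∉ (levels T).filter (fun τ => 2 * t < τ) := by
      simp only [Finset.mem_filter]
      rintro ⟨-, h⟩; linarith
    rw [share, share, hS, hS', hBeq, Finset.sum_insert hnotB, Finset.sum_insert hnot']
    have htail : ∀ τ ∈ (levels T).filter (fun τ => 2 * t < τ),
        (1 / τ - invSucc (levels T) τ) *
          (w i / ∑ j ∈ Finset.univ.filter (fun j => T j ≤ τ), w j) * K0 =
        (1 / τ - invSucc (levels T') τ) *
          (w i / ∑ j ∈ Finset.univ.filter (fun j => T' j ≤ τ), w j) * K0 := by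
      intro τ hτ
      exact hFeq τ (Finset.mem_filter.mp hτ).2.le
    rw [Finset.sum_congr rfl htail, hW, ← hv]
    ring

end myaux

section myaux2
open Finset

private lemma crit' {n : ℕ} (B K0 : ℝ) (K H w : Fin n → ℝ) (i : Fin n)
    (T : Fin n → ℝ) (hB : 0 < B) (hT : ∀ j, IsPOT B (T j)) :
    (indCost K0 K H w (Function.update T i (2 * T i)) i < indCost K0 K H w T i ↔
      H i * T i <
        (K i + w i / (∑ j ∈ Finset.univ.filter (fun j => T j ≤ T i), w j) * K0) /
          (2 * T i)) := by
  have ht : 0 < T i := pot_pos' hB (hT i)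
  have h2t : (0:ℝ) < 2 * T i := by linarith
  rw [indCost, indCost, share_step' B K0 w T i hB hT, Function.update_self]
  set W := ∑ j ∈ Finset.univ.filter (fun j => T j ≤ T i), w j with hW
  have e1 : K i / T i = K i / (2 * T i) + K i / (2 * T i) := by
    rw [← add_div, div_eq_div_iff ht.ne' h2t.ne']; ring
  have e2 : (1 / T i - 1 / (2 * T i)) = 1 / (2 * T i) := by
    field_simp; ring
  rw [e1, e2, add_div]
  have e3 : 1 / (2 * T i) * (w i / W) * K0 = w i / W * K0 / (2 * T i) := by ring
  rw [e3]
  constructor <;> intro h <;> linarith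

private lemma better_mono' {n : ℕ} (B K0 : ℝ) (K H w : Fin n → ℝ)
    (hB : 0 < B) (hK0 : 0 < K0) (hw : ∀ i, 0 < w i)
    (T1 T2 : Fin n → ℝ) (hT1 : ∀ j, IsPOT B (T1 j)) (hT2 : ∀ j, IsPOT B (T2 j))
    (i : Fin n) (hi : T1 i = T2 i)
    (hsub : grp T2 i (T2 i) ⊆ grp T1 i (T1 i)) :
    indCost K0 K H w (Function.update T1 i (2 * T1 i)) i < indCost K0 K H w T1 i →
    indCost K0 K H w (Function.update T2 i (2 * T2 i)) i < indCost K0 K H w T2 i := by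
  intro h1
  have hg : ∀ T : Fin n → ℝ, grp T i (T i) = Finset.univ.filter (fun j => T j ≤ T i) := by
    intro T
    rw [grp, Finset.insert_eq_self]
    exact Finset.mem_filter.mpr ⟨Finset.mem_univ i, le_refl _⟩
  rw [hg, hg] at hsub
  have hWle : (∑ j ∈ Finset.univ.filter (fun j => T2 j ≤ T2 i), w j)
      ≤ ∑ j ∈ Finset.univ.filter (fun j => T1 j ≤ T1 i), w j :=
    Finset.sum_le_sum_of_subset_of_nonneg hsub (fun j _ _ => (hw j).le)
  have hW2pos : 0 < ∑ j ∈ Finset.univ.filter (fun j => T2 j ≤ T2 i), w j := by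
    have hmem : i ∈ Finset.univ.filter (fun j => T2 j ≤ T2 i) := by
      simp
    have h := Finset.single_le_sum (f := w) (fun j _ => (hw j).le) hmem
    linarith [hw i]
  have hfrac : w i / (∑ j ∈ Finset.univ.filter (fun j => T1 j ≤ T1 i), w j)
      ≤ w i / (∑ j ∈ Finset.univ.filter (fun j => T2 j ≤ T2 i), w j) :=
    div_le_div_of_nonneg_left (hw i).le hW2pos hWle
  have hnum : K i + w i / (∑ j ∈ Finset.univ.filter (fun j => T1 j ≤ T1 i), w j) * K0
      ≤ K i + w i / (∑ j ∈ Finset.univ.filter (fun j => T2 j ≤ T2 i), w j) * K0 := by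
    have := mul_le_mul_of_nonneg_right hfrac hK0.le
    linarith
  have ht : 0 < T1 i := pot_pos' hB (hT1 i)
  have h2t : (0:ℝ) < 2 * T1 i := by linarith
  rw [crit' B K0 K H w i T1 hB hT1] at h1
  rw [crit' B K0 K H w i T2 hB hT2]
  calc H i * T2 i = H i * T1 i := by rw [hi]
    _ < (K i + w i / (∑ j ∈ Finset.univ.filter (fun j => T1 j ≤ T1 i), w j) * K0)
          / (2 * T1 i) := h1
    _ ≤ (K i + w i / (∑ j ∈ Finset.univ.filter (fun j => T2 j ≤ T2 i), w j) * K0)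
          / (2 * T1 i) := (div_le_div_iff_of_pos_right h2t).mpr hnum
    _ = (K i + w i / (∑ j ∈ Finset.univ.filter (fun j => T2 j ≤ T2 i), w j) * K0)
          / (2 * T2 i) := by rw [hi]

end myaux2

theorem statement1 {n : ℕ} (B K0 : ℝ) (K H w : Fin n → ℝ)
    (hB : 0 < B) (hK0 : 0 < K0) (hK : ∀ i, 0 ≤ K i) (hH : ∀ i, 0 < H i)
    (hw : ∀ i, 0 < w i)
    (T1 T2 : Fin n → ℝ) (hT1 : ∀ j, IsPOT B (T1 j)) (hT2 : ∀ j, IsPOT B (T2 j))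
    (i : Fin n) (hi : T1 i = T2 i) :
    (grp T2 i (T2 i) ⊆ grp T1 i (T1 i) →
      indCost K0 K H w (Function.update T1 i (2 * T1 i)) i < indCost K0 K H w T1 i →
      indCost K0 K H w (Function.update T2 i (2 * T2 i)) i < indCost K0 K H w T2 i) ∧
    (grp T1 i (T1 i) = grp T2 i (T2 i) →
      (indCost K0 K H w (Function.update T1 i (2 * T1 i)) i < indCost K0 K H w T1 i ↔
        indCost K0 K H w (Function.update T2 i (2 * T2 i)) i < indCost K0 K H w T2 i)) := by
  constructor
  · exact fun hsub => better_mono' B K0 K H w hB hK0 hw T1 T2 hT1 hT2 i hi hsub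
  · intro he
    constructor
    · exact better_mono' B K0 K H w hB hK0 hw T1 T2 hT1 hT2 i hi he.symm.le
    · exact better_mono' B K0 K H w hB hK0 hw T2 T1 hT2 hT1 i hi.symm he.le
end

section
/- Under any weighted proportional sharing rule WPS^w with strictly positive weights, let T be a POT policy with T_j ≥ T^c_j for every j ∈ N. Then every retailer i with T_i = T^c_i cannot reduce its cost by decreasing its replenishment interval: f_i(T^c_i;T_{-i}) ≤ f_i(2^{-z}·T^c_i;T_{-i}) for every z ∈ ℤ_{>0}. -/
open Finset

section AuxLemmas
lemma potRound_pos (B b : ℝ) (hB : 0 < B) : 0 < potRound B b := by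
  unfold potRound; positivity

lemma zpow_le_rpow_half (r : ℤ) (x : ℝ) (h : (r:ℝ) ≤ x + 1/2) :
    (2:ℝ) ^ r ≤ Real.sqrt 2 * (2:ℝ) ^ x := by
  have h1 : (2:ℝ) ^ r = (2:ℝ) ^ (r:ℝ) := by
    rw [← Real.rpow_intCast]
  rw [h1]
  have h2 : (2:ℝ) ^ (r:ℝ) ≤ (2:ℝ) ^ (x + 1/2) :=
    Real.rpow_le_rpow_of_exponent_le one_le_two h
  have h3 : (2:ℝ) ^ (x + 1/2) = Real.sqrt 2 * (2:ℝ) ^ x := by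
    rw [Real.rpow_add (by norm_num), Real.sqrt_eq_rpow]
    ring
  linarith [h2, h3.le]

lemma potRound_le (B b : ℝ) (hB : 0 < B) (hb : 0 < b) :
    potRound B b ≤ Real.sqrt 2 * b := by
  unfold potRound
  set x := Real.logb 2 (b / B) with hx
  have hbB : (0:ℝ) < b / B := by positivity
  have h2x : (2:ℝ) ^ x = b / B := Real.rpow_logb (by norm_num) (by norm_num) hbB
  have hr : ((round x : ℤ) : ℝ) ≤ x + 1/2 := by
    have := abs_sub_round x
    have h := abs_le.mp this
    linarith [h.1, h.2]
  have := zpow_le_rpow_half (round x) x hr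
  rw [h2x] at this
  calc (2:ℝ) ^ (round x) * B ≤ (Real.sqrt 2 * (b / B)) * B := by
        apply mul_le_mul_of_nonneg_right this hB.le
    _ = Real.sqrt 2 * b := by field_simp
  
lemma potRound_mono (B b₁ b₂ : ℝ) (hB : 0 < B) (hb₁ : 0 < b₁) (h : b₁ ≤ b₂) :
    potRound B b₁ ≤ potRound B b₂ := by
  unfold potRound
  have hlog : Real.logb 2 (b₁ / B) ≤ Real.logb 2 (b₂ / B) := by
    apply Real.logb_le_logb_of_le one_lt_two (by positivity)
    gcongr
  have hround : round (Real.logb 2 (b₁ / B)) ≤ round (Real.logb 2 (b₂ / B)) := by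
    rw [round_eq, round_eq]
    exact Int.floor_le_floor (by linarith)
  have : (2:ℝ) ^ (round (Real.logb 2 (b₁ / B))) ≤ (2:ℝ) ^ (round (Real.logb 2 (b₂ / B))) :=
    zpow_le_zpow_right₀ one_le_two hround
  exact mul_le_mul_of_nonneg_right this hB.le

lemma sval_le (n : ℕ) (K0 : ℝ) (K H : Fin n → ℝ) (i : Fin n) :
    sval n K0 K H ≤ (K0 + K i) / H i := by
  have hbdd : BddBelow ((fun S : Finset (Fin n) => (K0 + ∑ i ∈ S, K i) / ∑ i ∈ S, H i) '' {S | S.Nonempty}) :=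
    (Set.toFinite _).bddBelow
  have hmem : (K0 + K i) / H i ∈ (fun S : Finset (Fin n) => (K0 + ∑ i ∈ S, K i) / ∑ i ∈ S, H i) '' {S | S.Nonempty} := by
    refine ⟨{i}, ⟨i, Finset.mem_singleton_self i⟩, ?_⟩
    simp
  exact csInf_le hbdd hmem

lemma sval_pos (n : ℕ) (K0 : ℝ) (K H : Fin n → ℝ) (hn : 0 < n) (hK0 : 0 < K0)
    (hK : ∀ i, 0 ≤ K i) (hH : ∀ i, 0 < H i) : 0 < sval n K0 K H := by
  have hHuniv : (0:ℝ) < ∑ j, H j := by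
    apply Finset.sum_pos (fun j _ => hH j)
    exact Finset.univ_nonempty_iff.mpr (Fin.pos_iff_nonempty.mp hn)
  have hlb : K0 / (∑ j, H j) ≤ sval n K0 K H := by
    apply le_csInf
    · exact ⟨_, ⟨{⟨0, hn⟩}, ⟨_, Finset.mem_singleton_self _⟩, rfl⟩⟩
    · rintro x ⟨S, hS, rfl⟩
      have hSH : (0:ℝ) < ∑ j ∈ S, H j := Finset.sum_pos (fun j _ => hH j) hS
      have h1 : ∑ j ∈ S, H j ≤ ∑ j, H j :=
        Finset.sum_le_sum_of_subset_of_nonneg (Finset.subset_univ S) (fun j _ _ => (hH j).le)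
      have h2 : K0 ≤ K0 + ∑ j ∈ S, K j := by
        have : (0:ℝ) ≤ ∑ j ∈ S, K j := Finset.sum_nonneg (fun j _ => hK j)
        linarith
      calc K0 / (∑ j, H j) ≤ K0 / (∑ j ∈ S, H j) := by
            gcongr
        _ ≤ (K0 + ∑ j ∈ S, K j) / (∑ j ∈ S, H j) := by
            gcongr
  have : (0:ℝ) < K0 / (∑ j, H j) := by positivity
  linarith

section Aux

lemma invSucc_nonneg (L : Finset ℝ) (τ : ℝ) (hτ : 0 ≤ τ) : 0 ≤ invSucc L τ := by
  unfold invSucc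
  split
  · next h =>
    have hm := Finset.min'_mem _ h
    have h2 : τ < (L.filter fun u => τ < u).min' h := (Finset.mem_filter.mp hm).2
    have : (0:ℝ) < (L.filter fun u => τ < u).min' h := lt_of_le_of_lt hτ h2
    positivity
  · exact le_refl _

lemma invSucc_le (L : Finset ℝ) (τ b : ℝ) (hb : 0 < b)
    (h : ∀ x ∈ L, τ < x → b ≤ x) : invSucc L τ ≤ 1 / b := by
  unfold invSucc
  split
  · next hne =>
    have hm := Finset.min'_mem _ hne
    have hmem := Finset.mem_filter.mp hm
    have hbm : b ≤ (L.filter fun u => τ < u).min' hne := h _ hmem.1 hmem.2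
    exact one_div_le_one_div_of_le hb hbm
  · positivity

lemma invSucc_congr (L L' : Finset ℝ) (τ τ' : ℝ)
    (h : L.filter (fun u => τ < u) = L'.filter (fun u => τ' < u)) :
    invSucc L τ = invSucc L' τ' := by
  unfold invSucc
  rw [h]

variable {n : ℕ}

lemma levels_eq (T : Fin n → ℝ) (i : Fin n) :
    levels T = insert (T i) ((Finset.univ.erase i).image T) := by
  unfold levels
  conv_lhs => rw [← Finset.insert_erase (Finset.mem_univ i), Finset.image_insert]

lemma levels_update (T : Fin n → ℝ) (i : Fin n) (t' : ℝ) :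
    levels (Function.update T i t') = insert t' ((Finset.univ.erase i).image T) := by
  rw [levels_eq (Function.update T i t') i, Function.update_self]
  congr 1
  apply Finset.image_congr
  intro j hj
  exact Function.update_of_ne (Finset.mem_erase.mp hj).1 _ _

lemma weights_filter_eq (T : Fin n → ℝ) (i : Fin n) (t' u : ℝ) (ht' : t' ≤ u)
    (hu : T i ≤ u) :
    (Finset.univ.filter (fun j => Function.update T i t' j ≤ u)) =
      (Finset.univ.filter (fun j => T j ≤ u)) := by
  ext j
  simp only [Finset.mem_filter, Finset.mem_univ, true_and]
  by_cases hj : j = i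
  · subst hj; rw [Function.update_self]; exact ⟨fun _ => hu, fun _ => ht'⟩
  · rw [Function.update_of_ne hj]

end Aux

section Decomp
open Finset
variable {n : ℕ}

/-- Decomposition of the share of `i` at its own level. -/
lemma share_eq (K0 : ℝ) (w T : Fin n → ℝ) (i : Fin n) :
    share K0 w T i =
      (if T i ∈ (Finset.univ.erase i).image T then 0 else
        (1 / T i - invSucc (levels T) (T i)) *
          (w i / ∑ j ∈ Finset.univ.filter (fun j => T j ≤ T i), w j) * K0)
      + ∑ u ∈ ((Finset.univ.erase i).image T).filter (fun u => T i ≤ u),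
          (1 / u - invSucc (levels T) u) *
            (w i / ∑ j ∈ Finset.univ.filter (fun j => T j ≤ u), w j) * K0 := by
  set Lo := (Finset.univ.erase i).image T with hLo
  unfold share
  rw [levels_eq T i]
  rw [Finset.filter_insert, if_pos le_rfl]
  by_cases ht : T i ∈ Lo
  · rw [Finset.insert_eq_self.mpr (Finset.mem_filter.mpr ⟨ht, le_rfl⟩), if_pos ht,
      zero_add]
  · have hni : T i ∉ Lo.filter (fun u => T i ≤ u) := fun h => ht (Finset.mem_filter.mp h).1
    rw [Finset.sum_insert hni, if_neg ht]

/-- Decomposition of the deviator's share. -/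
lemma share_update_eq (K0 : ℝ) (w T : Fin n → ℝ) (i : Fin n) (t' : ℝ)
    (hlt : t' < T i) :
    share K0 w (Function.update T i t') i =
      (∑ u ∈ (levels (Function.update T i t')).filter (fun u => t' ≤ u ∧ u < T i),
        (1 / u - invSucc (levels (Function.update T i t')) u) *
          (w i / ∑ j ∈ Finset.univ.filter (fun j => Function.update T i t' j ≤ u), w j) * K0)
      + ∑ u ∈ ((Finset.univ.erase i).image T).filter (fun u => T i ≤ u),
          (1 / u - invSucc (levels T) u) *
            (w i / ∑ j ∈ Finset.univ.filter (fun j => T j ≤ u), w j) * K0 := by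
  set t := T i with htdef
  set Lo := (Finset.univ.erase i).image T with hLo
  set T' := Function.update T i t' with hT'
  have hT'i : T' i = t' := Function.update_self i t' T
  unfold share
  rw [hT'i]
  have hsplit : (levels T').filter (fun u => t' ≤ u)
      = (levels T').filter (fun u => t' ≤ u ∧ u < t)
        ∪ (levels T').filter (fun u => t ≤ u) := by
    rw [← Finset.filter_or]
    apply Finset.filter_congr
    intro u _
    constructor
    · intro h
      by_cases hut : u < t
      · exact Or.inl ⟨h, hut⟩
      · exact Or.inr (not_lt.mp hut)
    · rintro (⟨h, _⟩ | h)
      · exact h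
      · exact le_trans hlt.le h
  have hdisj : Disjoint ((levels T').filter (fun u => t' ≤ u ∧ u < t))
      ((levels T').filter (fun u => t ≤ u)) := by
    apply Finset.disjoint_filter_filter'
    rw [disjoint_iff_inf_le]
    intro u hu
    simp only [Pi.inf_apply, inf_Prop_eq] at hu
    exact absurd hu.2 (not_le.mpr hu.1.2)
  rw [hsplit, Finset.sum_union hdisj]
  congr 1
  have hQ : (levels T').filter (fun u => t ≤ u) = Lo.filter (fun u => t ≤ u) := by
    rw [hT', levels_update, Finset.filter_insert, if_neg (not_le.mpr hlt)]
  rw [hQ]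
  apply Finset.sum_congr rfl
  intro u hu
  have htu : t ≤ u := (Finset.mem_filter.mp hu).2
  have hinv : invSucc (levels T') u = invSucc (levels T) u := by
    apply invSucc_congr
    rw [hT', levels_update, levels_eq T i, Finset.filter_insert, Finset.filter_insert,
      if_neg (not_lt.mpr (le_trans hlt.le htu)), if_neg (not_lt.mpr htu)]
  rw [hinv, weights_filter_eq T i t' u (le_trans hlt.le htu) htu]

end Decomp

/-- Telescoping lower bound. -/
lemma telescope (M : Finset ℝ) (hpos : ∀ x ∈ M, 0 < x) :
    ∀ (b : ℝ) (a : ℝ), a ∈ M → a < b →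
    1 / a - 1 / b ≤ ∑ u ∈ M.filter (fun u => a ≤ u ∧ u < b), (1 / u - invSucc M u) := by
  suffices H : ∀ (N : ℕ) (b a : ℝ), a ∈ M → a < b →
      (M.filter (fun u => a ≤ u ∧ u < b)).card ≤ N →
      1 / a - 1 / b ≤ ∑ u ∈ M.filter (fun u => a ≤ u ∧ u < b), (1 / u - invSucc M u) by
    intro b a ha hab
    exact H (M.filter (fun u => a ≤ u ∧ u < b)).card b a ha hab le_rfl
  intro N
  induction N with
  | zero =>
    intro b a ha hab hcard
    exfalso
    have : a ∈ M.filter (fun u => a ≤ u ∧ u < b) := by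
      simp [Finset.mem_filter, ha, hab]
    have := Finset.card_pos.mpr ⟨a, this⟩
    omega
  | succ N ih =>
    intro b a ha hab hcard
    set P := M.filter (fun u => a ≤ u ∧ u < b) with hP
    have haP : a ∈ P := by simp [hP, Finset.mem_filter, ha, hab]
    have hPne : P.Nonempty := ⟨a, haP⟩
    set m := P.max' hPne with hm
    have hmP : m ∈ P := Finset.max'_mem _ _
    have hmM : m ∈ M := (Finset.mem_filter.mp hmP).1
    have ham : a ≤ m := (Finset.mem_filter.mp hmP).2.1
    have hmb : m < b := (Finset.mem_filter.mp hmP).2.2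
    have hmpos : 0 < m := hpos m hmM
    have hb : 0 < b := lt_trans hmpos hmb
    have hsuccm : invSucc M m ≤ 1 / b := by
      apply invSucc_le M m b hb
      intro x hx hmx
      by_contra hxb
      push_neg at hxb
      have hxP : x ∈ P := by
        refine Finset.mem_filter.mpr ⟨hx, le_trans ham (le_of_lt hmx), hxb⟩
      exact absurd (Finset.le_max' P x hxP) (not_le.mpr hmx)
    rcases eq_or_lt_of_le ham with heq | hlt
    · -- m = a, so P = {a}
      have hPa : P = {a} := by
        apply Finset.eq_singleton_iff_unique_mem.mpr
        refine ⟨haP, fun x hx => ?_⟩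
        have h1 := (Finset.mem_filter.mp hx).2.1
        have h2 : x ≤ m := Finset.le_max' P x hx
        rw [← heq] at h2
        linarith
      rw [hPa, Finset.sum_singleton]
      rw [← heq] at hsuccm
      linarith
    · -- a < m
      have hPerase : M.filter (fun u => a ≤ u ∧ u < m) = P.erase m := by
        ext x
        simp only [Finset.mem_filter, Finset.mem_erase, hP]
        constructor
        · rintro ⟨hxM, hax, hxm⟩
          exact ⟨ne_of_lt hxm, hxM, hax, lt_trans hxm hmb⟩
        · rintro ⟨hne, hxM, hax, hxb⟩
          refine ⟨hxM, hax, lt_of_le_of_ne ?_ hne⟩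
          exact Finset.le_max' P x (Finset.mem_filter.mpr ⟨hxM, hax, hxb⟩)
      have hcard2 : (M.filter (fun u => a ≤ u ∧ u < m)).card ≤ N := by
        rw [hPerase]
        have := Finset.card_erase_of_mem hmP
        omega
      have ihm := ih m a ha hlt hcard2
      have hsum : ∑ u ∈ P, (1 / u - invSucc M u)
          = ∑ u ∈ P.erase m, (1 / u - invSucc M u) + (1 / m - invSucc M m) := by
        rw [Finset.sum_erase_add P _ hmP]
      rw [hsum, ← hPerase]
      have h1m : (0:ℝ) < 1 / m := by positivity
      linarith

section Main
open Finset
variable {n : ℕ}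

lemma share_mono (K0 : ℝ) (w T : Fin n → ℝ) (i : Fin n) (t' : ℝ)
    (hK0 : 0 ≤ K0) (hw : ∀ j, 0 < w j) (hTpos : ∀ j, 0 < T j)
    (ht' : 0 < t') (h2 : 2 * t' ≤ T i) :
    share K0 w T i ≤ share K0 w (Function.update T i t') i := by
  have ht : 0 < T i := hTpos i
  have hlt : t' < T i := by linarith
  rw [share_eq K0 w T i, share_update_eq K0 w T i t' hlt]
  apply add_le_add_left
  set t := T i with htdef
  set T' := Function.update T i t' with hT'def
  set Lo := (Finset.univ.erase i).image T with hLodef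
  set X := levels T' with hXdef
  have hXins : X = insert t' Lo := levels_update T i t'
  have hLopos : ∀ x ∈ Lo, 0 < x := by
    intro x hx
    obtain ⟨j, _, rfl⟩ := Finset.mem_image.mp hx
    exact hTpos j
  have hXpos : ∀ x ∈ X, 0 < x := by
    intro x hx
    rw [hXins] at hx
    rcases Finset.mem_insert.mp hx with rfl | hx
    · exact ht'
    · exact hLopos x hx
  have hDpos : ∀ u : ℝ, t' ≤ u →
      (0:ℝ) < ∑ j ∈ Finset.univ.filter (fun j => T' j ≤ u), w j := by
    intro u hu
    apply Finset.sum_pos (fun j _ => hw j)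
    refine ⟨i, Finset.mem_filter.mpr ⟨Finset.mem_univ i, ?_⟩⟩
    rw [hT'def, Function.update_self]
    exact hu
  have hbr_nonneg : ∀ u ∈ X.filter (fun u => t' ≤ u ∧ u < t),
      0 ≤ 1 / u - invSucc X u := by
    intro u hu
    have hupos : 0 < u := hXpos u (Finset.mem_filter.mp hu).1
    have := invSucc_le X u u hupos (fun x _ hx => hx.le)
    linarith
  by_cases htLo : t ∈ Lo
  · rw [if_pos htLo]
    apply Finset.sum_nonneg
    intro u hu
    have hu1 := (Finset.mem_filter.mp hu).2.1
    apply mul_nonneg (mul_nonneg (hbr_nonneg u hu) _) hK0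
    exact div_nonneg (hw i).le (hDpos u hu1).le
  · rw [if_neg htLo]
    set D0 := ∑ j ∈ Finset.univ.filter (fun j => T j ≤ t), w j with hD0def
    have hD0pos : 0 < D0 := by
      apply Finset.sum_pos (fun j _ => hw j)
      exact ⟨i, Finset.mem_filter.mpr ⟨Finset.mem_univ i, le_rfl⟩⟩
    set γ := w i / D0 * K0 with hγdef
    have hγ0 : 0 ≤ γ := mul_nonneg (div_nonneg (hw i).le hD0pos.le) hK0
    have hstep : ∀ u ∈ X.filter (fun u => t' ≤ u ∧ u < t),
        (1 / u - invSucc X u) * γ ≤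
          (1 / u - invSucc X u) *
            (w i / ∑ j ∈ Finset.univ.filter (fun j => T' j ≤ u), w j) * K0 := by
      intro u hu
      obtain ⟨huX, hu1, hu2⟩ := Finset.mem_filter.mp hu
      have hu1' : t' ≤ u := hu1
      have hDu : (0:ℝ) < ∑ j ∈ Finset.univ.filter (fun j => T' j ≤ u), w j := hDpos u hu1'
      have hsub : (Finset.univ.filter (fun j => T' j ≤ u)) ⊆
          (Finset.univ.filter (fun j => T j ≤ t)) := by
        intro j hj
        have hj' := (Finset.mem_filter.mp hj).2
        refine Finset.mem_filter.mpr ⟨Finset.mem_univ j, ?_⟩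
        by_cases hji : j = i
        · subst hji; exact le_rfl
        · rw [hT'def, Function.update_of_ne hji] at hj'
          exact le_trans hj' hu2.le
      have hDle : (∑ j ∈ Finset.univ.filter (fun j => T' j ≤ u), w j) ≤ D0 :=
        Finset.sum_le_sum_of_subset_of_nonneg hsub (fun j _ _ => (hw j).le)
      have hdivle : w i / D0 ≤ w i / ∑ j ∈ Finset.univ.filter (fun j => T' j ≤ u), w j :=
        div_le_div_of_nonneg_left (hw i).le hDu hDle
      have hbr := hbr_nonneg u hu
      rw [hγdef, ← mul_assoc]
      apply mul_le_mul_of_nonneg_right _ hK0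
      exact mul_le_mul_of_nonneg_left hdivle hbr
    have htel : 1 / t' - 1 / t ≤
        ∑ u ∈ X.filter (fun u => t' ≤ u ∧ u < t), (1 / u - invSucc X u) := by
      apply telescope X hXpos t t' _ hlt
      rw [hXins]; exact Finset.mem_insert_self t' Lo
    have h1t : 1 / t ≤ 1 / t' - 1 / t := by
      have h := one_div_le_one_div_of_le ht' (show t' ≤ t / 2 by linarith)
      have h2t : 1 / (t / 2) = 2 * (1 / t) := by
        rw [one_div_div]; ring
      linarith
    have hfirst : (1 / t - invSucc (levels T) t) * (w i / D0) * K0 ≤ γ * (1 / t) := by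
      have hs := invSucc_nonneg (levels T) t ht.le
      have : (1 / t - invSucc (levels T) t) * (w i / D0) * K0
          = (1 / t - invSucc (levels T) t) * γ := by rw [hγdef]; ring
      rw [this, mul_comm γ (1/t)]
      exact mul_le_mul_of_nonneg_right (by linarith) hγ0
    calc (1 / t - invSucc (levels T) t) * (w i / D0) * K0
        ≤ γ * (1 / t) := hfirst
      _ ≤ γ * (1 / t' - 1 / t) := mul_le_mul_of_nonneg_left h1t hγ0
      _ ≤ γ * ∑ u ∈ X.filter (fun u => t' ≤ u ∧ u < t), (1 / u - invSucc X u) :=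
          mul_le_mul_of_nonneg_left htel hγ0
      _ = ∑ u ∈ X.filter (fun u => t' ≤ u ∧ u < t), (1 / u - invSucc X u) * γ := by
          rw [Finset.mul_sum]; apply Finset.sum_congr rfl; intros; ring
      _ ≤ _ := Finset.sum_le_sum hstep

end Main

section MainB
open Finset
variable {n : ℕ}

lemma share_quant (K0 : ℝ) (w T : Fin n → ℝ) (i : Fin n) (t' : ℝ)
    (hK0 : 0 ≤ K0) (hw : ∀ j, 0 < w j) (hTpos : ∀ j, 0 < T j)
    (ht' : 0 < t') (hlt : t' < T i) (hall : ∀ j, T i ≤ T j) :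
    share K0 w T i + K0 * (1 / t' - 1 / T i) ≤
      share K0 w (Function.update T i t') i := by
  have ht : 0 < T i := hTpos i
  rw [share_eq K0 w T i, share_update_eq K0 w T i t' hlt]
  set t := T i with htdef
  set T' := Function.update T i t' with hT'def
  set Lo := (Finset.univ.erase i).image T with hLodef
  set X := levels T' with hXdef
  have hXins : X = insert t' Lo := levels_update T i t'
  have hLoge : ∀ x ∈ Lo, t ≤ x := by
    intro x hx
    obtain ⟨j, _, rfl⟩ := Finset.mem_image.mp hx
    exact hall j
  have hPsing : X.filter (fun u => t' ≤ u ∧ u < t) = {t'} := by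
    ext x
    simp only [Finset.mem_filter, Finset.mem_singleton]
    constructor
    · rintro ⟨hxX, hx1, hx2⟩
      rw [hXins] at hxX
      rcases Finset.mem_insert.mp hxX with rfl | hxLo
      · rfl
      · exact absurd (hLoge x hxLo) (not_le.mpr hx2)
    · rintro rfl
      exact ⟨hXins ▸ Finset.mem_insert_self _ _, le_rfl, hlt⟩
  rw [hPsing, Finset.sum_singleton]
  have hD : (∑ j ∈ Finset.univ.filter (fun j => T' j ≤ t'), w j) = w i := by
    have : (Finset.univ.filter (fun j => T' j ≤ t')) = {i} := by
      ext j
      simp only [Finset.mem_filter, Finset.mem_univ, true_and, Finset.mem_singleton]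
      constructor
      · intro hj
        by_contra hji
        rw [hT'def, Function.update_of_ne hji] at hj
        exact absurd (le_trans (hall j) hj) (not_le.mpr hlt)
      · rintro rfl
        rw [hT'def, Function.update_self]
    rw [this, Finset.sum_singleton]
  rw [hD, div_self (ne_of_gt (hw i)), mul_one]
  set β := invSucc X t' with hβdef
  have hβt : β ≤ 1 / t := by
    apply invSucc_le X t' t ht
    intro x hx hx'
    rw [hXins] at hx
    rcases Finset.mem_insert.mp hx with rfl | hxLo
    · exact absurd hx' (lt_irrefl _)
    · exact hLoge x hxLo
  by_cases htLo : t ∈ Lo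
  · rw [if_pos htLo]
    have : K0 * (1 / t' - 1 / t) ≤ (1 / t' - β) * K0 := by
      rw [mul_comm]
      exact mul_le_mul_of_nonneg_right (by linarith) hK0
    linarith
  · rw [if_neg htLo]
    have hβeq : invSucc (levels T) t = β := by
      apply invSucc_congr
      have h1 : (levels T).filter (fun u => t < u) = Lo := by
        rw [levels_eq T i, Finset.filter_insert, if_neg (lt_irrefl t)]
        apply Finset.filter_true_of_mem
        intro x hx
        exact lt_of_le_of_ne (hLoge x hx) (fun h => htLo (h ▸ hx))
      have h2 : X.filter (fun u => t' < u) = Lo := by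
        rw [hXins, Finset.filter_insert, if_neg (lt_irrefl t')]
        apply Finset.filter_true_of_mem
        intro x hx
        exact lt_of_lt_of_le hlt (hLoge x hx)
      rw [h1, h2]
    rw [hβeq]
    set D0 := ∑ j ∈ Finset.univ.filter (fun j => T j ≤ t), w j with hD0def
    have hD0pos : 0 < D0 := by
      apply Finset.sum_pos (fun j _ => hw j)
      exact ⟨i, Finset.mem_filter.mpr ⟨Finset.mem_univ i, le_rfl⟩⟩
    have hwle : w i ≤ D0 := by
      apply Finset.single_le_sum (fun j _ => (hw j).le)
      exact Finset.mem_filter.mpr ⟨Finset.mem_univ i, le_rfl⟩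
    have hdiv1 : w i / D0 ≤ 1 := (div_le_one hD0pos).mpr hwle
    have hdiv0 : 0 ≤ w i / D0 := div_nonneg (hw i).le hD0pos.le
    have hterm : (1 / t - β) * (w i / D0) * K0 ≤ (1 / t - β) * K0 := by
      have hbr : 0 ≤ 1 / t - β := by linarith
      have := mul_le_mul_of_nonneg_left hdiv1 hbr
      calc (1 / t - β) * (w i / D0) * K0 ≤ ((1 / t - β) * 1) * K0 :=
            mul_le_mul_of_nonneg_right this hK0
        _ = (1 / t - β) * K0 := by ring
    have hsplit : (1 / t' - β) * K0 = (1 / t - β) * K0 + (1 / t' - 1 / t) * K0 := by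
      ring
    have : K0 * (1 / t' - 1 / t) = (1 / t' - 1 / t) * K0 := by ring
    linarith

end MainB

end AuxLemmas

theorem statement3 {n : ℕ} (B K0 : ℝ) (K H w T : Fin n → ℝ)
    (hB : 0 < B) (hK0 : 0 < K0) (hK : ∀ i, 0 ≤ K i) (hH : ∀ i, 0 < H i)
    (hw : ∀ i, 0 < w i)
    (hpot : ∀ j, IsPOT B (T j)) (hge : ∀ j, Tc n B K0 K H j ≤ T j)
    (i : Fin n) (hi : T i = Tc n B K0 K H i) (z : ℤ) (hz : 0 < z) :
    indCost K0 K H w T i ≤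
      indCost K0 K H w (Function.update T i ((2 : ℝ) ^ (-z) * Tc n B K0 K H i)) i := by
  have hn : 0 < n := i.pos
  set s := sval n K0 K H with hsdef
  have hs_pos : 0 < s := sval_pos n K0 K H hn hK0 hK hH
  set t := Tc n B K0 K H i with htdef
  have hTcpos : ∀ j, 0 < Tc n B K0 K H j := by
    intro j
    unfold Tc
    split <;> exact potRound_pos _ _ hB
  have ht : 0 < t := by rw [htdef]; exact hTcpos i
  have hTpos : ∀ j, 0 < T j := fun j => lt_of_lt_of_le (hTcpos j) (hge j)
  set t' := (2:ℝ) ^ (-z) * t with ht'def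
  have hpowpos : (0:ℝ) < (2:ℝ) ^ (-z) := zpow_pos (by norm_num) _
  have ht' : 0 < t' := mul_pos hpowpos ht
  have hpowle : (2:ℝ) ^ (-z) ≤ 1 / 2 := by
    have h1 : (2:ℝ) ^ (-1 : ℤ) = 1 / 2 := by norm_num
    have h2 : (2:ℝ) ^ (-z) ≤ (2:ℝ) ^ (-1 : ℤ) :=
      zpow_le_zpow_right₀ one_le_two (by omega)
    exact h2.trans_eq h1
  have ht'half : t' ≤ t / 2 := by
    rw [ht'def]
    calc (2:ℝ) ^ (-z) * t ≤ (1/2) * t := mul_le_mul_of_nonneg_right hpowle ht.le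
      _ = t / 2 := by ring
  have hlt : t' < t := by linarith
  have h2 : 2 * t' ≤ T i := by rw [hi]; linarith
  have hlt' : t' < T i := by rw [hi]; exact hlt
  simp only [indCost, Function.update_self]
  rw [hi]
  have htt' : t * t' ≤ t ^ 2 / 2 := by
    calc t * t' ≤ t * (t / 2) := mul_le_mul_of_nonneg_left ht'half ht.le
      _ = t ^ 2 / 2 := by ring
  have hd : 0 ≤ t - t' := by linarith
  by_cases hcase : K i ≤ s * H i
  · -- i ∈ U : t = potRound B √s, all T j ≥ t
    have htval : t = potRound B (Real.sqrt s) := by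
      rw [htdef]; unfold Tc; rw [← hsdef, if_pos hcase]
    have hsq : t ^ 2 ≤ 2 * s := by
      have h1 : t ≤ Real.sqrt 2 * Real.sqrt s := by
        rw [htval]; exact potRound_le B _ hB (Real.sqrt_pos.mpr hs_pos)
      have h2' : (Real.sqrt 2 * Real.sqrt s) ^ 2 = 2 * s := by
        rw [mul_pow, Real.sq_sqrt (by norm_num : (0:ℝ) ≤ 2), Real.sq_sqrt hs_pos.le]
      calc t ^ 2 ≤ (Real.sqrt 2 * Real.sqrt s) ^ 2 := by
            apply pow_le_pow_left₀ ht.le h1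
        _ = 2 * s := h2'
    have hs_le : s ≤ (K0 + K i) / H i := sval_le n K0 K H i
    have key : H i * (t * t') ≤ K0 + K i := by
      have h3 : t * t' ≤ s := by linarith
      have h4 : H i * (t * t') ≤ H i * s := mul_le_mul_of_nonneg_left h3 (hH i).le
      have h5 : s * H i ≤ K0 + K i := (le_div_iff₀ (hH i)).mp hs_le
      calc H i * (t * t') ≤ H i * s := h4
        _ = s * H i := by ring
        _ ≤ K0 + K i := h5
    have hall : ∀ j, T i ≤ T j := by
      intro j
      rw [hi, htval]
      refine le_trans ?_ (hge j)
      unfold Tc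
      rw [← hsdef]
      split
      · exact le_rfl
      · next hj =>
        apply potRound_mono B _ _ hB (Real.sqrt_pos.mpr hs_pos)
        apply Real.sqrt_le_sqrt
        rw [le_div_iff₀ (hH j)]
        exact (not_le.mp hj).le
    have hsq' := share_quant K0 w T i t' hK0.le hw hTpos ht' hlt' hall
    rw [hi] at hsq'
    have expand : H i * t' + K i / t' + K0 * (1 / t' - 1 / t) - (H i * t + K i / t)
        = ((K0 + K i) * (t - t') - H i * (t - t') * (t' * t)) / (t' * t) := by
      field_simp
      ring
    have key2 : H i * (t - t') * (t' * t) ≤ (K0 + K i) * (t - t') := by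
      calc H i * (t - t') * (t' * t) = (t - t') * (H i * (t * t')) := by ring
        _ ≤ (t - t') * (K0 + K i) := mul_le_mul_of_nonneg_left key hd
        _ = (K0 + K i) * (t - t') := by ring
    have hfrac : 0 ≤ ((K0 + K i) * (t - t') - H i * (t - t') * (t' * t)) / (t' * t) :=
      div_nonneg (by linarith) (by positivity)
    linarith [hsq', expand, hfrac]
  · -- i ∈ V : t = potRound B √(K i / H i)
    have hKipos : 0 < K i := lt_trans (mul_pos hs_pos (hH i)) (not_le.mp hcase)
    have hKH : 0 < K i / H i := div_pos hKipos (hH i)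
    have htval : t = potRound B (Real.sqrt (K i / H i)) := by
      rw [htdef]; unfold Tc; rw [← hsdef, if_neg hcase]
    have hsq : t ^ 2 ≤ 2 * (K i / H i) := by
      have h1 : t ≤ Real.sqrt 2 * Real.sqrt (K i / H i) := by
        rw [htval]; exact potRound_le B _ hB (Real.sqrt_pos.mpr hKH)
      have h2' : (Real.sqrt 2 * Real.sqrt (K i / H i)) ^ 2 = 2 * (K i / H i) := by
        rw [mul_pow, Real.sq_sqrt (by norm_num : (0:ℝ) ≤ 2), Real.sq_sqrt hKH.le]
      calc t ^ 2 ≤ (Real.sqrt 2 * Real.sqrt (K i / H i)) ^ 2 := by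
            apply pow_le_pow_left₀ ht.le h1
        _ = 2 * (K i / H i) := h2'
    have key : H i * (t * t') ≤ K i := by
      have h3 : t * t' ≤ K i / H i := by linarith
      have h4 := (le_div_iff₀ (hH i)).mp h3
      calc H i * (t * t') = t * t' * H i := by ring
        _ ≤ K i := h4
    have hsm := share_mono K0 w T i t' hK0.le hw hTpos ht' h2
    have expand : H i * t' + K i / t' - (H i * t + K i / t)
        = (K i * (t - t') - H i * (t - t') * (t' * t)) / (t' * t) := by
      field_simp
      ring
    have key2 : H i * (t - t') * (t' * t) ≤ K i * (t - t') := by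
      calc H i * (t - t') * (t' * t) = (t - t') * (H i * (t * t')) := by ring
        _ ≤ (t - t') * K i := mul_le_mul_of_nonneg_left key hd
        _ = K i * (t - t') := by ring
    have hfrac : 0 ≤ (K i * (t - t') - H i * (t - t') * (t' * t)) / (t' * t) :=
      div_nonneg (by linarith) (by positivity)
    linarith [hsm, expand, hfrac]
end
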